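/- For any integers m and any nonnegative integer k, the ratio of quantum dilogarithms satisfies E(x;q)^{-1}·E(q^m x;q) = Σ_{k≥0} q^{k²/2} [m choose k]_q x^k as formal power series in x, where E(x;q) = Π_{n≥0} (1 + q^{n+1/2} x)^{-1} and [m choose k]_q = (q^{m-k+1};q)_k/(q;q)_k with (a;q)_k = Π_{i=0}^{k-1}(1 - a q^i). -/

import Mathlib

noncomputable section
open Finset PowerSeries
open scoped Multiplicative WithZero

/-- The coefficient field: formal Laurent series over ℚ; `v` is the variable,
playing the role of `q^{1/2}`, and `q = v²`. -/
abbrev K : Type := LaurentSeries ℚ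

def v : K := HahnSeries.single 1 1

def q : K := v ^ 2

/-- The q-binomial coefficient `[m choose k]_z` with base `z`,
`[m choose k]_z = (z^{m-k+1};z)_k / (z;z)_k`, for `m : ℤ`, `k : ℕ`. -/
def qbin (z : K) (m : ℤ) (k : ℕ) : K :=
  (∏ i ∈ Finset.range k, (1 - z ^ (m - k + 1 + i))) /
    (∏ i ∈ Finset.range k, (1 - z ^ (i + 1)))

/-- `ofAdd (-e)` as an element of `ℤᵐ⁰`. -/
def oA (e : ℤ) : ℤᵐ⁰ := ((Multiplicative.ofAdd (-e) : Multiplicative ℤ) : ℤᵐ⁰)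

/-- `x` has valuation at most `ofAdd (-e)`, i.e. "order at least `e`". -/
def vle (x : K) (e : ℤ) : Prop := Valued.v x ≤ oA e

lemma oA_ne_zero (e : ℤ) : oA e ≠ 0 := WithZero.coe_ne_zero

lemma oA_mul (e f : ℤ) : oA e * oA f = oA (e + f) := by
  rw [oA, oA, oA, ← WithZero.coe_mul, ← ofAdd_add, neg_add]

lemma oA_le {e f : ℤ} : oA e ≤ oA f ↔ f ≤ e := by
  rw [oA, oA, WithZero.coe_le_coe, Multiplicative.ofAdd_le]
  exact neg_le_neg_iff

lemma oA_lt {e f : ℤ} : oA e < oA f ↔ f < e := by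
  rw [oA, oA, WithZero.coe_lt_coe, Multiplicative.ofAdd_lt]
  exact neg_lt_neg_iff

lemma val_v : Valued.v v = oA 1 := by
  exact LaurentSeries.valuation_single_zpow ℚ 1

lemma v_ne_zero : v ≠ 0 := by
  intro h
  have := val_v
  rw [h, map_zero] at this
  exact (oA_ne_zero 1) this.symm

lemma q_ne_zero : q ≠ 0 := pow_ne_zero 2 v_ne_zero

lemma val_q : Valued.v q = oA 2 := by
  rw [q, map_pow, val_v]
  rw [show (2:ℤ) = 1 + 1 by ring, ← oA_mul, sq]

lemma q_zpow_ne_one {z : ℤ} (hz : z ≠ 0) : q ^ z ≠ 1 := by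
  intro h
  have h2 : Valued.v (q ^ z) = (1 : ℤᵐ⁰) := by rw [h, map_one]
  rw [map_zpow₀, val_q] at h2
  rw [oA, ← WithZero.coe_zpow, show (1 : ℤᵐ⁰) = ((1 : Multiplicative ℤ) : ℤᵐ⁰) from rfl,
    WithZero.coe_inj] at h2
  have h3 := congrArg Multiplicative.toAdd h2
  rw [toAdd_zpow, toAdd_ofAdd, toAdd_one, smul_eq_mul] at h3
  omega

lemma vle_mono {x : K} {e f : ℤ} (h : vle x e) (hef : f ≤ e) : vle x f :=
  le_trans h (oA_le.mpr hef)

lemma vle_zero (e : ℤ) : vle 0 e := by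
  rw [vle, map_zero]; exact zero_le'

lemma vle_one : vle 1 0 := by rw [vle, map_one, oA, neg_zero]; rfl

lemma vle_mul {x y : K} {e f : ℤ} (hx : vle x e) (hy : vle y f) : vle (x * y) (e + f) := by
  rw [vle, map_mul, ← oA_mul]
  exact mul_le_mul' hx hy

lemma vle_pow {x : K} {e : ℤ} (h : vle x e) (n : ℕ) : vle (x ^ n) (n * e) := by
  induction n with
  | zero => simpa using vle_one
  | succ n ih =>
      rw [pow_succ]
      have := vle_mul ih h
      rwa [show (n : ℤ) * e + e = ((n+1 : ℕ) : ℤ) * e by push_cast; ring] at this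

lemma vle_neg {x : K} {e : ℤ} (h : vle x e) : vle (-x) e := by
  rwa [vle, Valuation.map_neg]

lemma vle_sub {x y : K} {e : ℤ} (hx : vle x e) (hy : vle y e) : vle (x - y) e :=
  Valuation.map_sub_le _ hx hy

lemma vle_sum {ι : Type*} {s : Finset ι} {g : ι → K} {e : ℤ}
    (h : ∀ i ∈ s, vle (g i) e) : vle (∑ i ∈ s, g i) e :=
  Valuation.map_sum_le _ h

lemma vle_v_pow (n : ℕ) : vle (v ^ n) n := by
  have := vle_pow (le_of_eq val_v) n
  simpa using this

lemma vle_exists (c : K) : ∃ γ : ℤ, vle c γ := by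
  rcases eq_or_ne c 0 with rfl | hc
  · exact ⟨0, vle_zero 0⟩
  · have h := (Valuation.ne_zero_iff Valued.v).mpr hc
    set w := Valued.v c with hw
    lift w to Multiplicative ℤ using h with g hg
    exact ⟨-Multiplicative.toAdd g, by rw [vle, ← hw, oA, neg_neg, ofAdd_toAdd]⟩

lemma vle_q_zpow (z : ℤ) : vle (q ^ z) (2 * z) := by
  rw [vle, map_zpow₀, val_q, oA, oA, ← WithZero.coe_zpow, WithZero.coe_le_coe, ← ofAdd_zsmul]
  simp [mul_comm]

/-- Power series in `x` over `K`, with the product (coefficientwise) topology,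
the topology on `K` being the valuation topology of Laurent series. -/
instance : TopologicalSpace (PowerSeries K) :=
  inferInstanceAs (TopologicalSpace ((Unit →₀ ℕ) → K))

instance : T2Space (PowerSeries K) :=
  inferInstanceAs (T2Space ((Unit →₀ ℕ) → K))

/-- Evaluation of a power series (as a function) at a coordinate is the coefficient. -/
lemma apply_eq_coeff (f : PowerSeries K) (d : Unit →₀ ℕ) :
    f d = PowerSeries.coeff (d ()) f := by
  show f d = f (Finsupp.single () (d ()))
  congr 1
  exact Finsupp.unique_single d

lemma continuous_coeff (k : ℕ) : Continuous fun f : PowerSeries K => PowerSeries.coeff k f := by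
  have : (fun f : PowerSeries K => PowerSeries.coeff k f)
      = fun f : PowerSeries K => f (Finsupp.single () k) := rfl
  rw [this]
  exact continuous_apply _

lemma ps_continuous_mul_left (a : PowerSeries K) :
    Continuous fun x : PowerSeries K => a * x := by
  apply continuous_pi
  intro d
  have h : (fun x : PowerSeries K => (a * x) d)
      = fun x : PowerSeries K => ∑ p ∈ Finset.HasAntidiagonal.antidiagonal (d ()),
          (PowerSeries.coeff p.1 a) * (PowerSeries.coeff p.2 x) := by
    funext x
    rw [apply_eq_coeff (a*x) d, PowerSeries.coeff_mul]
  show Continuous fun x : PowerSeries K => (a * x) d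
  rw [h]
  exact continuous_finset_sum _ fun p _ =>
    (continuous_const.mul (continuous_coeff p.2))

/-- The geometric series: `(1 + b·X)⁻¹ = ∑ (-b)^j X^j`. -/
lemma geom_inv (b : K) :
    (1 + PowerSeries.C b * PowerSeries.X)⁻¹ = PowerSeries.mk fun j => (-b) ^ j := by
  have hc : PowerSeries.constantCoeff (1 + PowerSeries.C b * PowerSeries.X) ≠ 0 := by
    simp
  symm
  rw [PowerSeries.eq_inv_iff_mul_eq_one hc]
  apply PowerSeries.ext
  intro n
  rw [mul_add, mul_one, show (PowerSeries.mk fun j => (-b) ^ j) * (PowerSeries.C b * PowerSeries.X)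
      = ((PowerSeries.mk fun j => (-b) ^ j) * PowerSeries.C b) * PowerSeries.X by ring]
  cases n with
  | zero => simp
  | succ n =>
      rw [map_add, PowerSeries.coeff_succ_mul_X, PowerSeries.coeff_mul_C, PowerSeries.coeff_mk,
        PowerSeries.coeff_mk, PowerSeries.coeff_one]
      simp only [if_neg (Nat.succ_ne_zero n)]
      ring

/-- `Edl u c` is the quantum dilogarithm `E(c·x; b) = ∏_{m≥0} (1 + b^{m+1/2}·c·x)⁻¹`
where `u = b^{1/2}`, so that `b^{m+1/2} = u^{2m+1}`. In particular
`Edl v 1 = E(x;q)` and `Edl v (q^m) = E(q^m x; q)`. -/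
def Edl (u c : K) : PowerSeries K :=
  ∏' m : ℕ, (1 + PowerSeries.C (c * u ^ (2 * m + 1)) * PowerSeries.X)⁻¹
/-- The `m`-th factor of the quantum dilogarithm. -/
def fct (c : K) (m : ℕ) : PowerSeries K :=
  (1 + PowerSeries.C (c * v ^ (2 * m + 1)) * PowerSeries.X)⁻¹

lemma Edl_eq_tprod (c : K) : Edl v c = ∏' m : ℕ, fct c m := rfl

lemma fct_eq (c : K) (m : ℕ) : fct c m = PowerSeries.mk fun j => (-(c * v ^ (2*m+1))) ^ j :=
  geom_inv _

lemma fct_shift (c : K) (m : ℕ) : fct c (m + 1) = fct (c * q) m := by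
  unfold fct
  congr 2
  rw [q]
  ring_nf

/-- Partial products of the dilogarithm factors. -/
def Pp (c : K) (s : Finset ℕ) : PowerSeries K := ∏ m ∈ s, fct c m

lemma coeff_zero_Pp (c : K) (s : Finset ℕ) : PowerSeries.coeff 0 (Pp c s) = 1 := by
  rw [PowerSeries.coeff_zero_eq_constantCoeff, Pp, map_prod]
  refine Finset.prod_eq_one fun m _ => ?_
  rw [fct_eq, ← PowerSeries.coeff_zero_eq_constantCoeff, PowerSeries.coeff_mk]
  simp

lemma vle_coeff_Pp {c : K} {γ : ℤ} (hc : vle c γ) (N : ℕ) :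
    ∀ (s : Finset ℕ), (∀ m ∈ s, N ≤ m) → ∀ j : ℕ, j ≠ 0 →
      vle (PowerSeries.coeff j (Pp c s)) (2 * N + j * (γ + 1)) := by
  intro s
  induction s using Finset.induction_on with
  | empty =>
      intro _ j hj
      rw [Pp, Finset.prod_empty, PowerSeries.coeff_one, if_neg hj]
      exact vle_zero _
  | @insert a s ha ih =>
      intro hmem j hj
      have haN : N ≤ a := hmem a (Finset.mem_insert_self a s)
      have hmem' : ∀ m ∈ s, N ≤ m := fun m hm => hmem m (Finset.mem_insert_of_mem hm)
      rw [Pp, Finset.prod_insert ha, PowerSeries.coeff_mul]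
      refine vle_sum fun p hp => ?_
      have hpsum : p.1 + p.2 = j := Finset.HasAntidiagonal.mem_antidiagonal.mp hp
      -- bound the first factor
      have hb : vle (c * v ^ (2*a+1)) (γ + ((2*a+1 : ℕ) : ℤ)) := vle_mul hc (vle_v_pow (2*a+1))
      have h1 : vle (PowerSeries.coeff p.1 (fct c a)) (p.1 * (γ + (2*(a:ℤ)+1))) := by
        rw [fct_eq, PowerSeries.coeff_mk]
        have h := vle_pow (vle_neg hb) p.1
        rwa [show (p.1 : ℤ) * (γ + (2*(a:ℤ)+1)) = p.1 * (γ + ((2*a+1 : ℕ) : ℤ)) by push_cast; ring]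
      by_cases hp2 : p.2 = 0
      · have hp1 : p.1 = j := by omega
        have h2 : PowerSeries.coeff p.2 (Pp c s) = 1 := by rw [hp2]; exact coeff_zero_Pp c s
        have := vle_mul h1 (h2 ▸ vle_one)
        refine vle_mono (by rwa [add_zero] at this) ?_
        have h1j : 1 ≤ j := Nat.one_le_iff_ne_zero.mpr hj
        rw [hp1]
        have : (2:ℤ) * N ≤ j * (2*a) := by
          have : (1:ℤ) ≤ (j:ℤ) := by exact_mod_cast h1j
          have hNa : (N:ℤ) ≤ a := by exact_mod_cast haN
          nlinarith
        nlinarith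
      · have h2 := ih hmem' p.2 hp2
        have := vle_mul h1 h2
        refine vle_mono this ?_
        have hps : (p.1 : ℤ) + p.2 = j := by exact_mod_cast hpsum
        rw [← hps]
        nlinarith [mul_nonneg (Int.ofNat_nonneg p.1) (Int.ofNat_nonneg a)]

/-- unified bound, valid also for `j = 0` when the product is over any set. -/
lemma vle_coeff_Pp' {c : K} {γ : ℤ} (hc : vle c γ) (s : Finset ℕ) (j : ℕ) :
    vle (PowerSeries.coeff j (Pp c s)) (if j = 0 then 0 else j * (γ + 1)) := by
  by_cases hj : j = 0
  · rw [hj, coeff_zero_Pp, if_pos rfl]; exact vle_one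
  · rw [if_neg hj]
    have := vle_coeff_Pp hc 0 s (fun m _ => Nat.zero_le m) j hj
    simpa using this

/-- Key estimate: adding factors beyond `range N` changes each coefficient by
something of order at least `2N + k(γ+1)`. -/
lemma vle_coeff_Pp_diff {c : K} {γ : ℤ} (hc : vle c γ) (N k : ℕ) (s : Finset ℕ)
    (hsub : Finset.range N ⊆ s) :
    vle (PowerSeries.coeff k (Pp c s) - PowerSeries.coeff k (Pp c (Finset.range N)))
      (2 * N + k * (γ + 1)) := by
  have hsplit : Pp c s = Pp c (Finset.range N) * Pp c (s \ Finset.range N) := by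
    rw [Pp, Pp, Pp, ← Finset.prod_union Finset.disjoint_sdiff,
      Finset.union_sdiff_of_subset hsub]
  rw [hsplit, PowerSeries.coeff_mul]
  have hmem : ((k, 0) : ℕ × ℕ) ∈ Finset.HasAntidiagonal.antidiagonal k := by
    simp
  rw [← Finset.sum_erase_add _ _ hmem, PowerSeries.coeff_zero_eq_constantCoeff]
  rw [show (PowerSeries.constantCoeff) (Pp c (s \ Finset.range N)) = 1 from by
    rw [← PowerSeries.coeff_zero_eq_constantCoeff]; exact coeff_zero_Pp _ _]
  rw [mul_one, add_sub_cancel_right]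
  refine vle_sum fun p hp => ?_
  have hp' := Finset.mem_of_mem_erase hp
  have hpsum : p.1 + p.2 = k := Finset.HasAntidiagonal.mem_antidiagonal.mp hp'
  have hp2 : p.2 ≠ 0 := by
    intro h0
    have hpk : p = (k, 0) := by
      have h1k : p.1 = k := by omega
      exact Prod.ext h1k h0
    rw [hpk] at hp
    exact Finset.notMem_erase _ _ hp
  have h1 := vle_coeff_Pp' hc (Finset.range N) p.1
  have h2 : vle (PowerSeries.coeff p.2 (Pp c (s \ Finset.range N))) (2*N + p.2 * (γ+1)) := by
    refine vle_coeff_Pp hc N _ (fun m hm => ?_) p.2 hp2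
    rcases Finset.mem_sdiff.mp hm with ⟨_, hm2⟩
    exact Nat.le_of_not_lt fun hlt => hm2 (Finset.mem_range.mpr hlt)
  have := vle_mul h1 h2
  refine vle_mono this ?_
  have hps : (p.1 : ℤ) + p.2 = k := by exact_mod_cast hpsum
  by_cases h10 : p.1 = 0
  · rw [if_pos h10]
    have hk : (p.2 : ℤ) = k := by rw [← hps, h10]; simp
    rw [hk]
    linarith
  · rw [if_neg h10]
    rw [← hps]
    ring_nf
    linarith

open Filter in
lemma cauchySeq_coeff_Pp (c : K) (k : ℕ) :
    CauchySeq (fun s : Finset ℕ => PowerSeries.coeff k (Pp c s)) := by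
  obtain ⟨γ, hc⟩ := vle_exists c
  rw [(Valued.hasBasis_uniformity K ℤᵐ⁰).cauchySeq_iff]
  rintro i -
  -- express the unit `i` as a coercion
  have hine : (MonoidWithZeroHom.ValueGroup₀.embedding i.1 : ℤᵐ⁰) ≠ 0 :=
    (map_ne_zero_iff _ MonoidWithZeroHom.ValueGroup₀.embedding_injective).mpr i.ne_zero
  set w := (MonoidWithZeroHom.ValueGroup₀.embedding i.1 : ℤᵐ⁰) with hw
  lift w to Multiplicative ℤ using hine with g hg
  set G : ℤ := Multiplicative.toAdd g with hG
  -- choose N large enough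
  set t : ℤ := (k : ℤ) * (γ + 1) with ht
  obtain ⟨N, hN⟩ : ∃ N : ℕ, -(2 * (N:ℤ) + t) < G := by
    refine ⟨(-G - t + 1).toNat, ?_⟩
    have h1 : -G - t + 1 ≤ ((-G - t + 1).toNat : ℤ) := Int.self_le_toNat _
    have h2 : (0:ℤ) ≤ ((-G - t + 1).toNat : ℤ) := Int.ofNat_nonneg _
    linarith
  have hbound : oA (2 * (N:ℤ) + t) < (g : ℤᵐ⁰) := by
    rw [oA, WithZero.coe_lt_coe, ← ofAdd_toAdd g, Multiplicative.ofAdd_lt]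
    exact hN
  refine ⟨Finset.range N, fun s hs s' hs' => ?_⟩
  have h1 := vle_coeff_Pp_diff hc N k s hs
  have h2 := vle_coeff_Pp_diff hc N k s' hs'
  have hsub : vle (PowerSeries.coeff k (Pp c s') - PowerSeries.coeff k (Pp c s))
      (2 * (N:ℤ) + t) := by
    have := vle_sub h2 h1
    rwa [sub_sub_sub_cancel_right] at this
  exact (Valuation.restrict_lt_iff_lt_embedding _).mpr (hw ▸ lt_of_le_of_lt hsub hbound)

open Filter in
lemma exists_hasProd (c : K) : ∃ A : PowerSeries K, HasProd (fct c) A := by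
  have hconv : ∀ d : Unit →₀ ℕ, ∃ L : K,
      Tendsto (fun s : Finset ℕ => (Pp c s) d) atTop (nhds L) := by
    intro d
    have : CauchySeq (fun s : Finset ℕ => (Pp c s) d) := by
      have he : (fun s : Finset ℕ => (Pp c s) d)
          = fun s : Finset ℕ => PowerSeries.coeff (d ()) (Pp c s) := by
        funext s; exact apply_eq_coeff _ d
      rw [he]
      exact cauchySeq_coeff_Pp c (d ())
    exact cauchySeq_tendsto_of_complete this
  choose A hA using hconv
  refine ⟨A, ?_⟩
  unfold HasProd
  refine tendsto_pi_nhds.mpr ?_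
  intro d
  exact hA d

lemma multipliable_fct (c : K) : Multipliable (fct c) :=
  let ⟨A, hA⟩ := exists_hasProd c
  ⟨A, hA⟩

lemma hasProd_Edl (c : K) : HasProd (fct c) (Edl v c) := by
  rw [Edl_eq_tprod]
  exact (multipliable_fct c).hasProd

open Filter in
lemma coeff_zero_Edl (c : K) : PowerSeries.coeff 0 (Edl v c) = 1 := by
  have h := hasProd_Edl c
  unfold HasProd at h
  have h0 := (tendsto_pi_nhds.mp h) (Finsupp.single () 0)
  have he : (fun s : Finset ℕ => (∏ m ∈ s, fct c m) (Finsupp.single () 0))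
      = fun _ : Finset ℕ => (1 : K) := by
    funext s
    have := apply_eq_coeff (Pp c s) (Finsupp.single () 0)
    rw [Pp] at this
    rw [this]
    simp only [Finsupp.single_eq_same]
    exact coeff_zero_Pp c s
  rw [he] at h0
  have h1 : Tendsto (fun _ : Finset ℕ => (1:K)) atTop (nhds 1) := tendsto_const_nhds
  have := tendsto_nhds_unique h0 h1
  rw [apply_eq_coeff (Edl v c) (Finsupp.single () 0)] at this
  simpa using this

lemma constantCoeff_Edl (c : K) : PowerSeries.constantCoeff (Edl v c) = 1 := by
  rw [← PowerSeries.coeff_zero_eq_constantCoeff]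
  exact coeff_zero_Edl c

open Filter in
set_option maxHeartbeats 1000000 in
/-- The shift identity: `E(cx) = (1 + c v X)⁻¹ E(cqx)`. -/
lemma Edl_shift (c : K) : Edl v c = fct c 0 * Edl v (c * q) := by
  -- the embedding `m ↦ m + 1`
  let e : ℕ ↪ ℕ := ⟨Nat.succ, Nat.succ_injective⟩
  let ins : Finset ℕ → Finset ℕ := fun s => insert 0 (s.map e)
  have hmono : Monotone ins := by
    intro s t hst
    exact Finset.insert_subset_insert _ (Finset.map_subset_map.mpr hst)
  have hcof : ∀ x : ℕ, ∃ s : Finset ℕ, x ∈ ins s := by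
    intro x
    cases x with
    | zero => exact ⟨∅, Finset.mem_insert_self _ _⟩
    | succ n => exact ⟨{n}, Finset.mem_insert_of_mem (by simp [e])⟩
  have htends : Tendsto ins atTop atTop := Filter.tendsto_atTop_finset_of_monotone hmono hcof
  have hP : ∀ s : Finset ℕ, (∏ m ∈ ins s, fct c m) = fct c 0 * ∏ m ∈ s, fct (c * q) m := by
    intro s
    have h0 : 0 ∉ s.map e := by simp [e]
    show (∏ m ∈ insert 0 (s.map e), fct c m) = _
    rw [Finset.prod_insert h0, Finset.prod_map]
    congr 1
    refine Finset.prod_congr rfl fun m _ => ?_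
    show fct c (m + 1) = fct (c * q) m
    exact fct_shift c m
  have h1 : Tendsto (fun s : Finset ℕ => ∏ m ∈ ins s, fct c m) atTop (nhds (Edl v c)) :=
    (hasProd_Edl c).comp htends
  have h2 : Tendsto (fun s : Finset ℕ => fct c 0 * ∏ m ∈ s, fct (c * q) m) atTop
      (nhds (fct c 0 * Edl v (c * q))) :=
    ((ps_continuous_mul_left (fct c 0)).continuousAt.tendsto.comp (hasProd_Edl (c * q)))
  have he : (fun s : Finset ℕ => ∏ m ∈ ins s, fct c m)
      = fun s : Finset ℕ => fct c 0 * ∏ m ∈ s, fct (c * q) m := funext hP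
  rw [he] at h1
  exact tendsto_nhds_unique h1 h2

/-- `E(cq·x) = (1 + c·v·X) * E(c·x)`. -/
lemma Edl_mul_q (c : K) :
    Edl v (c * q) = (1 + PowerSeries.C (c * v) * PowerSeries.X) * Edl v c := by
  have h := Edl_shift c
  have hu : (1 + PowerSeries.C (c * v) * PowerSeries.X) * fct c 0 = 1 := by
    rw [fct]
    have : c * v ^ (2 * 0 + 1) = c * v := by ring
    rw [this]
    exact PowerSeries.mul_inv_cancel _ (by simp)
  calc Edl v (c * q) = 1 * Edl v (c * q) := (one_mul _).symm
    _ = ((1 + PowerSeries.C (c * v) * PowerSeries.X) * fct c 0) * Edl v (c * q) := by rw [hu]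
    _ = (1 + PowerSeries.C (c * v) * PowerSeries.X) * (fct c 0 * Edl v (c * q)) := by ring
    _ = (1 + PowerSeries.C (c * v) * PowerSeries.X) * Edl v c := by rw [← h]

lemma one_sub_q_pow_ne_zero {n : ℕ} (hn : n ≠ 0) : (1 : K) - q ^ (n : ℕ) ≠ 0 := by
  have := q_zpow_ne_one (z := (n : ℤ)) (by exact_mod_cast hn)
  rw [zpow_natCast] at this
  intro h
  exact this (by linear_combination -h)

lemma den_ne_zero (k : ℕ) : (∏ i ∈ Finset.range k, ((1:K) - q ^ (i + 1))) ≠ 0 :=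
  Finset.prod_ne_zero_iff.mpr fun i _ => one_sub_q_pow_ne_zero (Nat.succ_ne_zero i)

lemma qbin_k_zero (z : K) (m : ℤ) : qbin z m 0 = 1 := by
  rw [qbin]; simp

lemma qbin_zero_left {k : ℕ} (hk : k ≠ 0) : qbin q 0 k = 0 := by
  rw [qbin]
  rw [Finset.prod_eq_zero (Finset.mem_range.mpr (Nat.pred_lt hk))]
  · exact zero_div _
  · have he : (0:ℤ) - k + 1 + (k.pred : ℤ) = 0 := by
      have h1 : 1 ≤ k := Nat.one_le_iff_ne_zero.mpr hk
      rw [Nat.pred_eq_sub_one]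
      push_cast [h1]
      ring
    rw [he, zpow_zero, sub_self]

lemma qbin_pascal (m : ℤ) (k : ℕ) :
    qbin q (m + 1) (k + 1) = qbin q m (k + 1) + q ^ (m - k) * qbin q m k := by
  set D : K := ∏ i ∈ Finset.range k, (1 - q ^ (i + 1)) with hDdef
  set Nm : K := ∏ i ∈ Finset.range k, (1 - q ^ (m - k + 1 + i)) with hNdef
  have hD : D ≠ 0 := den_ne_zero k
  have hE : (1:K) - q ^ (k + 1) ≠ 0 := one_sub_q_pow_ne_zero (Nat.succ_ne_zero k)
  have hDk1 : (∏ i ∈ Finset.range (k+1), ((1:K) - q ^ (i + 1))) = D * (1 - q ^ (k+1)) := by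
    rw [Finset.prod_range_succ]
  have h1 : (∏ i ∈ Finset.range (k+1), ((1:K) - q ^ ((m+1) - ((k+1):ℕ) + 1 + i)))
      = Nm * (1 - q ^ (m+1)) := by
    rw [Finset.prod_range_succ]
    congr 1
    · refine Finset.prod_congr rfl fun i _ => ?_
      congr 2
      push_cast
      ring
    · congr 2
      push_cast
      ring
  have h2 : (∏ i ∈ Finset.range (k+1), ((1:K) - q ^ (m - ((k+1):ℕ) + 1 + i)))
      = (1 - q ^ (m - k)) * Nm := by
    rw [Finset.prod_range_succ']
    rw [mul_comm]
    congr 1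
    · congr 2
      push_cast
      ring
    · refine Finset.prod_congr rfl fun i _ => ?_
      congr 2
      push_cast
      ring
  rw [qbin, qbin, qbin, hDk1, h1, h2, ← hDdef, ← hNdef]
  set A : K := q ^ (m - (k:ℤ)) with hAdef
  have hA : q ^ (m+1) = A * q ^ (k+1) := by
    rw [hAdef, ← zpow_natCast q (k+1), ← zpow_add₀ q_ne_zero]
    congr 1
    push_cast
    ring
  rw [hA]
  field_simp
  ring

def Gser (m : ℤ) : PowerSeries K := PowerSeries.mk fun k => v ^ (k ^ 2) * qbin q m k

lemma Gser_zero : Gser 0 = 1 := by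
  apply PowerSeries.ext
  intro n
  rw [Gser, PowerSeries.coeff_mk, PowerSeries.coeff_one]
  cases n with
  | zero => simp [qbin_k_zero]
  | succ k =>
      rw [if_neg (Nat.succ_ne_zero k), qbin_zero_left (Nat.succ_ne_zero k), mul_zero]

lemma Gser_succ (m : ℤ) :
    Gser (m + 1) = Gser m * (1 + PowerSeries.C (q ^ m * v) * PowerSeries.X) := by
  apply PowerSeries.ext
  intro n
  rw [mul_add, mul_one, map_add, show Gser m * (PowerSeries.C (q ^ m * v) * PowerSeries.X)
      = (Gser m * PowerSeries.C (q ^ m * v)) * PowerSeries.X by ring]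
  cases n with
  | zero =>
      rw [Gser, Gser, PowerSeries.coeff_mk, PowerSeries.coeff_mk, PowerSeries.coeff_zero_mul_X,
        qbin_k_zero, qbin_k_zero, add_zero]
  | succ k =>
      rw [Gser, Gser, PowerSeries.coeff_mk, PowerSeries.coeff_succ_mul_X,
        PowerSeries.coeff_mul_C]
      simp only [PowerSeries.coeff_mk]
      rw [qbin_pascal]
      have hq2 : q ^ (m - (k:ℤ)) * v ^ (2*k) = q ^ m := by
        have hvv : ((v : K) ^ 2) ^ k = v ^ (2*k) := by rw [← pow_mul]
        rw [← hvv, ← q, ← zpow_natCast q k, ← zpow_add₀ q_ne_zero]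
        congr 1
        ring
      have hv2 : (v : K) ^ ((k+1)^2) = v ^ (k^2) * v ^ (2*k) * v := by ring
      rw [hv2]
      linear_combination (v ^ (k^2) * v * qbin q m k) * hq2

/-- `E(x;q)⁻¹·E(q^m x;q) = ∑_{k≥0} q^{k²/2} [m choose k]_q x^k` for any `m : ℤ`. -/
theorem E_ratio_qbinom_sum (m : ℤ) :
    (Edl v 1)⁻¹ * Edl v (q ^ m) =
      PowerSeries.mk fun k => v ^ (k ^ 2) * qbin q m k := by
  show (Edl v 1)⁻¹ * Edl v (q ^ m) = Gser m
  induction m using Int.induction_on with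
  | zero =>
      rw [zpow_zero, Gser_zero]
      exact PowerSeries.inv_mul_cancel _ (by rw [constantCoeff_Edl]; exact one_ne_zero)
  | succ i ih =>
      rw [zpow_add_one₀ q_ne_zero, Edl_mul_q (q ^ (i:ℤ)), Gser_succ]
      rw [show (Edl v 1)⁻¹ * ((1 + PowerSeries.C (q ^ (i:ℤ) * v) * PowerSeries.X)
          * Edl v (q ^ (i:ℤ)))
        = ((Edl v 1)⁻¹ * Edl v (q ^ (i:ℤ))) * (1 + PowerSeries.C (q ^ (i:ℤ) * v)
          * PowerSeries.X) by ring, ih]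
  | pred i ih =>
      set c : K := q ^ (-(i:ℤ) - 1) with hc
      have hq : q ^ (-(i:ℤ)) = c * q := by
        rw [hc, ← zpow_add_one₀ q_ne_zero]
        congr 1
        ring
      set u : PowerSeries K := 1 + PowerSeries.C (c * v) * PowerSeries.X with hu
      have hG : Gser (-(i:ℤ)) = Gser (-(i:ℤ) - 1) * u := by
        have := Gser_succ (-(i:ℤ) - 1)
        rw [show (-(i:ℤ) - 1) + 1 = -(i:ℤ) by ring] at this
        rw [this, hu, hc]
      have hEq : ((Edl v 1)⁻¹ * Edl v c) * u = Gser (-(i:ℤ) - 1) * u := by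
        rw [← hG, ← ih, hq, Edl_mul_q c]
        ring
      have hune : u ≠ 0 := by
        intro h
        have h1 : PowerSeries.constantCoeff u = 1 := by rw [hu]; simp
        rw [h, map_zero] at h1
        exact zero_ne_one h1
      exact mul_right_cancel₀ hune hEq
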